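/- Let y be a nonnegative square-integrable real random variable with E[y] = μ where 0 ≤ μ ≤ 1, and suppose E[y²] ≤ 1.05771·μ + 0.231·μ². Then E[min(y, 1)] ≥ 0.731·μ. -/

import Mathlib

open MeasureTheory

/-- Lemma 3.1(c): if `y ≥ 0` is square-integrable with `E[y] = μ ∈ [0,1]` and
`E[y²] ≤ 1.05771·μ + 0.231·μ²`, then `E[min(y,1)] ≥ 0.731·μ`. -/
theorem second_moment_to_ratio_c
    {Ω : Type*} [MeasurableSpace Ω] (P : Measure Ω) [IsProbabilityMeasure P]
    (y : Ω → ℝ) (μ : ℝ)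
    (hy : MemLp y 2 P) (hpos : ∀ ω, 0 ≤ y ω)
    (hmean : ∫ ω, y ω ∂P = μ) (hμ0 : 0 ≤ μ) (hμ1 : μ ≤ 1)
    (hsq : ∫ ω, (y ω) ^ 2 ∂P ≤ 1.05771 * μ + 0.231 * μ ^ 2) :
    0.731 * μ ≤ ∫ ω, min (y ω) 1 ∂P := by
  obtain ⟨s, hs⟩ : ∃ s : ℝ, s = 2 - 0.462 * μ := ⟨_, rfl⟩
  have hs1 : (1:ℝ)/2 ≤ s - 1 := by rw [hs]; nlinarith
  have hyint : Integrable y P := hy.integrable one_le_two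
  have hy2 : Integrable (fun ω => (y ω) ^ 2) P := hy.integrable_sq
  have hB : Integrable (fun ω => 2 * s * y ω) P := hyint.const_mul _
  have hA : Integrable (fun ω => (y ω) ^ 2 - 2 * s * y ω) P := hy2.sub hB
  have hminm : AEStronglyMeasurable (fun ω => min (y ω) 1) P :=
    (hy.1.aemeasurable.min aemeasurable_const).aestronglyMeasurable
  have hmin : Integrable (fun ω => min (y ω) 1) P := by
    refine Integrable.mono' (integrable_const 1) hminm ?_
    filter_upwards with ω
    rw [Real.norm_eq_abs, abs_le]
    have h0 : (0:ℝ) ≤ min (y ω) 1 := le_min (hpos ω) zero_le_one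
    exact ⟨by linarith, min_le_right _ _⟩
  -- pointwise inequality
  have hpt : ∀ ω, 4 * (s - 1) - (y ω - s) ^ 2 ≤ 4 * (s - 1) * min (y ω) 1 := by
    intro ω
    rcases le_total (y ω) 1 with h | h
    · rw [min_eq_left h]; nlinarith [sq_nonneg (y ω + s - 2)]
    · rw [min_eq_right h]; nlinarith [sq_nonneg (y ω - s)]
  have hys : Integrable (fun ω => (y ω - s) ^ 2) P := by
    have h2 : (fun ω => (y ω - s) ^ 2) = fun ω => ((y ω) ^ 2 - 2 * s * y ω) + s ^ 2 := by
      funext ω; ring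
    rw [h2]; exact hA.add (integrable_const _)
  have hLint : Integrable (fun ω => 4 * (s - 1) - (y ω - s) ^ 2) P :=
    (integrable_const (4 * (s - 1))).sub hys
  have key : ∫ ω, (4 * (s - 1) - (y ω - s) ^ 2) ∂P
      ≤ ∫ ω, 4 * (s - 1) * min (y ω) 1 ∂P :=
    integral_mono hLint (hmin.const_mul _) hpt
  have e0 : ∫ ω, (y ω - s) ^ 2 ∂P = (∫ ω, (y ω) ^ 2 ∂P) - 2 * s * μ + s ^ 2 := by
    rw [show (fun ω => (y ω - s) ^ 2) = fun ω => ((y ω) ^ 2 - 2 * s * y ω) + s ^ 2 from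
      funext fun ω => by ring]
    rw [integral_add hA (integrable_const _), integral_sub hy2 hB, integral_const_mul,
      hmean, integral_const]
    simp [measure_univ]
  have e1 : ∫ ω, (4 * (s - 1) - (y ω - s) ^ 2) ∂P
      = 4 * (s - 1) - ((∫ ω, (y ω) ^ 2 ∂P) - 2 * s * μ + s ^ 2) := by
    rw [integral_sub (integrable_const _) hys, e0, integral_const]
    simp [measure_univ]
  have e2 : ∫ ω, 4 * (s - 1) * min (y ω) 1 ∂P = 4 * (s - 1) * ∫ ω, min (y ω) 1 ∂P :=
    integral_const_mul _ _
  rw [e1, e2, hs] at key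
  nlinarith [key, hsq, mul_nonneg hμ0 (by linarith : (0:ℝ) ≤ 1 - μ),
    (by nlinarith : (0:ℝ) < 1 - 0.462 * μ)]
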